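/- Let n ≥ 1, let k_1 < k_2 < … < k_n be strictly positive real numbers, let f(u) := (−1)^{n+1} · u · ∏_{i=1}^n (1 − u/k_i), and let y_0 ∈ [0, k_n]. Then there exists a differentiable function y : ℝ → ℝ with y(0) = y_0 and y′(t) = f(y(t)) for all t ∈ ℝ; i.e., the solution of the Cauchy problem with initial datum y_0 ∈ [0, k_n] is global in time. -/

import Mathlib

open Finset

/-- Global existence for an autonomous ODE with a bounded, globally Lipschitz RHS. -/
lemma global_of_bounded_lipschitz (g : ℝ → ℝ) (L : NNReal) (hg : LipschitzWith L g)
    (C : ℝ) (hC : ∀ x, ‖g x‖ ≤ C) (y₀ : ℝ) :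
    ∃ y : ℝ → ℝ, y 0 = y₀ ∧ ∀ t : ℝ, HasDerivAt y (g (y t)) t := by
  have hC0 : 0 ≤ C := le_trans (norm_nonneg _) (hC 0)
  -- solutions on Icc (-(m+1)) (m+1)
  have hsol : ∀ m : ℕ, ∃ y : ℝ → ℝ, y 0 = y₀ ∧
      ∀ t ∈ Set.Icc (-(m + 1 : ℝ)) (m + 1), HasDerivWithinAt y (g (y t))
        (Set.Icc (-(m + 1 : ℝ)) (m + 1)) t := by
    intro m
    have hm1 : (0 : ℝ) ≤ (m : ℝ) + 1 := by positivity
    have hpl : IsPicardLindelof (fun _ x => g x) (tmin := -(m + 1 : ℝ)) (tmax := (m + 1 : ℝ))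
        ⟨0, by constructor <;> linarith⟩ y₀ (⟨C, hC0⟩ * ⟨(m : ℝ) + 1, hm1⟩) 0 ⟨C, hC0⟩ L := by
      refine ⟨fun t _ => hg.lipschitzOnWith, fun x _ => continuousOn_const,
        fun t _ x _ => hC x, ?_⟩
      have h : max ((m + 1 : ℝ) - 0) (0 - -(m + 1)) = (m : ℝ) + 1 := by
        rw [sub_zero, zero_sub, neg_neg, max_self]
      show C * max ((m + 1 : ℝ) - 0) (0 - -(m + 1)) ≤ C * ((m : ℝ) + 1) - 0
      rw [h, sub_zero]
    exact hpl.exists_eq_forall_mem_Icc_hasDerivWithinAt₀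
  choose Y hY0 hY using hsol
  -- derivative on the open interval
  have key : ∀ m : ℕ, ∀ t ∈ Set.Ioo (-(m + 1 : ℝ)) (m + 1),
      HasDerivAt (Y m) (g (Y m t)) t := by
    intro m t ht
    exact (hY m t (Set.Ioo_subset_Icc_self ht)).hasDerivAt (Icc_mem_nhds ht.1 ht.2)
  have hvlip : ∀ t : ℝ, LipschitzOnWith L (fun x => g x) (Set.univ : Set ℝ) :=
    fun _ => hg.lipschitzOnWith
  -- consistency of the solutions
  have uniq : ∀ a b : ℕ, ∀ t : ℝ, t ∈ Set.Ioo (-(a + 1 : ℝ)) (a + 1) →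
      t ∈ Set.Ioo (-(b + 1 : ℝ)) (b + 1) → Y a t = Y b t := by
    intro a b t hta htb
    set c : ℕ := min a b with hc
    have hca : (c : ℝ) ≤ a := by exact_mod_cast Nat.cast_le.mpr (min_le_left a b)
    have hcb : (c : ℝ) ≤ b := by exact_mod_cast Nat.cast_le.mpr (min_le_right a b)
    have htc : t ∈ Set.Ioo (-(c + 1 : ℝ)) (c + 1) := by
      rcases le_total (a : ℝ) b with h | h
      · have : (c : ℝ) = a := by
          have : c = a := min_eq_left (by exact_mod_cast h)
          exact_mod_cast congrArg (Nat.cast : ℕ → ℝ) this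
        rw [this]; exact hta
      · have : (c : ℝ) = b := by
          have : c = b := min_eq_right (by exact_mod_cast h)
          exact_mod_cast congrArg (Nat.cast : ℕ → ℝ) this
        rw [this]; exact htb
    have hsub_a : Set.Ioo (-(c + 1 : ℝ)) (c + 1) ⊆ Set.Ioo (-(a + 1 : ℝ)) (a + 1) :=
      Set.Ioo_subset_Ioo (by linarith) (by linarith)
    have hsub_b : Set.Ioo (-(c + 1 : ℝ)) (c + 1) ⊆ Set.Ioo (-(b + 1 : ℝ)) (b + 1) :=
      Set.Ioo_subset_Ioo (by linarith) (by linarith)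
    have h0 : (0 : ℝ) ∈ Set.Ioo (-(c + 1 : ℝ)) (c + 1) := by
      constructor <;> [nlinarith [Nat.cast_nonneg (α := ℝ) c]; positivity]
    have := ODE_solution_unique_of_mem_Ioo (v := fun _ x => g x)
      (s := fun _ => (Set.univ : Set ℝ)) (K := L) (fun t _ => hvlip t) h0
      (fun t' ht' => ⟨key a t' (hsub_a ht'), trivial⟩)
      (fun t' ht' => ⟨key b t' (hsub_b ht'), trivial⟩)
      (by rw [hY0 a, hY0 b])
    exact this htc
  -- glue
  refine ⟨fun t => Y ⌈|t|⌉₊ t, ?_, ?_⟩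
  · simpa using hY0 ⌈|(0 : ℝ)|⌉₊
  · intro t
    set m : ℕ := ⌈|t|⌉₊ with hm
    have htm : t ∈ Set.Ioo (-(m + 1 : ℝ)) (m + 1) := by
      have h1 : |t| ≤ (m : ℝ) := Nat.le_ceil _
      have h2 := abs_lt.mp (lt_of_le_of_lt h1 (by linarith : (m : ℝ) < m + 1))
      exact ⟨h2.1, h2.2⟩
    have heq : (fun s => Y ⌈|s|⌉₊ s) =ᶠ[nhds t] Y m := by
      have hopen : IsOpen (Set.Ioo (-(m + 1 : ℝ)) (m + 1)) := isOpen_Ioo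
      filter_upwards [hopen.mem_nhds htm] with s hs
      have hsm : s ∈ Set.Ioo (-(⌈|s|⌉₊ + 1 : ℝ)) (⌈|s|⌉₊ + 1) := by
        have h1 : |s| ≤ (⌈|s|⌉₊ : ℝ) := Nat.le_ceil _
        have h2 := abs_lt.mp (lt_of_le_of_lt h1 (by linarith : ((⌈|s|⌉₊ : ℕ) : ℝ) < ⌈|s|⌉₊ + 1))
        exact ⟨h2.1, h2.2⟩
      exact uniq ⌈|s|⌉₊ m s hsm hs
    have hd := key m t htm
    have : HasDerivAt (fun s => Y ⌈|s|⌉₊ s) (g (Y m t)) t := hd.congr_of_eventuallyEq heq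
    simpa [heq.self_of_nhds] using this

theorem global_solution_exists (n : ℕ) (hn : 1 ≤ n) (k : Fin n → ℝ)
    (hk : ∀ i, 0 < k i) (hmono : StrictMono k)
    (f : ℝ → ℝ) (hf : ∀ u, f u = (-1 : ℝ) ^ (n + 1) * u * ∏ i, (1 - u / k i))
    (y₀ : ℝ) (hy₀ : y₀ ∈ Set.Icc 0 (k ⟨n - 1, by omega⟩)) :
    ∃ y : ℝ → ℝ, y 0 = y₀ ∧ ∀ t : ℝ, HasDerivAt y (f (y t)) t := by
  set K : ℝ := k ⟨n - 1, by omega⟩ with hKdef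
  have hK : 0 < K := hk _
  -- f is C¹
  have hfeq : f = fun u : ℝ => (-1 : ℝ) ^ (n + 1) * u * ∏ i, (1 - u / k i) := funext hf
  have hfc : ContDiff ℝ 1 f := by
    rw [hfeq]
    refine ContDiff.mul (contDiff_const.mul contDiff_id) ?_
    refine contDiff_prod fun i _ => ?_
    exact contDiff_const.sub (contDiff_id.div_const _)
  -- zeros of f at 0 and K
  have hf0 : f 0 = 0 := by rw [hf]; ring
  have hfK : f K = 0 := by
    rw [hf]
    have : (∏ i, (1 - K / k i)) = 0 :=
      Finset.prod_eq_zero (Finset.mem_univ (⟨n - 1, by omega⟩ : Fin n))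
        (by rw [← hKdef, div_self hK.ne']; ring)
    rw [this]; ring
  -- the projection onto [0, K]
  set proj : ℝ → ℝ := fun u => max (min u K) 0 with hproj
  have hprojmem : ∀ u, proj u ∈ Set.Icc 0 K :=
    fun u => ⟨le_max_right _ _, max_le (min_le_right _ _) hK.le⟩
  have hprojeq : ∀ u ∈ Set.Icc 0 K, proj u = u := by
    intro u hu
    simp only [hproj, min_eq_left hu.2, max_eq_left hu.1]
  have hprojlip : LipschitzWith 1 proj := (LipschitzWith.id.min_const K).max_const 0
  -- Lipschitz constant for f on [0, K]
  have hderiv_cont : Continuous (deriv f) := hfc.continuous_deriv le_rfl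
  obtain ⟨M, hM⟩ := (isCompact_Icc (a := (0:ℝ)) (b := K)).exists_bound_of_continuousOn
    hderiv_cont.continuousOn
  set L : NNReal := ⟨max M 0, le_max_right _ _⟩ with hL
  have hflip : LipschitzOnWith L f (Set.Icc 0 K) := by
    apply Convex.lipschitzOnWith_of_nnnorm_deriv_le
      (fun x _ => hfc.differentiable one_ne_zero x)
    · intro x hx
      have h1 : ‖deriv f x‖ ≤ (L : ℝ) := le_trans (hM x hx) (le_max_left _ _)
      exact_mod_cast h1
    · exact convex_Icc 0 K
  -- the modified RHS
  set g : ℝ → ℝ := fun u => f (proj u) with hg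
  have hglip : LipschitzWith (L * 1) g := by
    have h := hflip.comp (hprojlip.lipschitzOnWith (s := Set.univ))
      (fun u _ => hprojmem u)
    rw [lipschitzOnWith_univ] at h
    exact h
  -- boundedness of g
  obtain ⟨C, hCb⟩ := (isCompact_Icc (a := (0:ℝ)) (b := K)).exists_bound_of_continuousOn
    (hfc.continuous.continuousOn (s := Set.Icc 0 K))
  have hgb : ∀ u, ‖g u‖ ≤ C := fun u => hCb _ (hprojmem u)
  -- global solution for g
  obtain ⟨y, hy0, hyd⟩ := global_of_bounded_lipschitz g (L * 1) hglip C hgb y₀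
  -- invariance: y stays in [0, K]
  have hgK : g K = 0 := by rw [hg]; simp only [hprojeq K ⟨hK.le, le_rfl⟩]; exact hfK
  have hg0 : g 0 = 0 := by rw [hg]; simp only [hprojeq 0 ⟨le_rfl, hK.le⟩]; exact hf0
  have hycont : Continuous y := continuous_iff_continuousAt.mpr fun t => (hyd t).continuousAt
  have hmem : ∀ t, y t ∈ Set.Icc 0 K := by
    intro t
    by_contra hmemc
    have hconst : ∀ c : ℝ, g c = 0 → (∃ s : ℝ, y s = c) → y t = c := by
      rintro c hc ⟨s, hs⟩
      set B : ℝ := |t| + |s| + 1 with hB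
      have hBt : t ∈ Set.Ioo (-B) B := by
        constructor <;> [nlinarith [abs_nonneg s, neg_abs_le t, le_abs_self t];
          nlinarith [abs_nonneg s, le_abs_self t]]
      have hBs : s ∈ Set.Ioo (-B) B := by
        constructor <;> [nlinarith [abs_nonneg t, neg_abs_le s];
          nlinarith [abs_nonneg t, le_abs_self s]]
      have := ODE_solution_unique_of_mem_Ioo (v := fun _ x => g x)
        (f := y) (g := fun _ => c)
        (s := fun _ => (Set.univ : Set ℝ)) (K := L * 1)
        (fun _ _ => hglip.lipschitzOnWith) hBs
        (fun t' _ => ⟨hyd t', trivial⟩)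
        (fun t' _ => ⟨by simpa [hc] using (hasDerivAt_const t' c), trivial⟩)
        (by simpa using hs)
      exact this hBt
    rcases not_and_or.mp (fun h => hmemc ⟨h.1, h.2⟩) with h | h
    · push_neg at h
      -- y t < 0; y crosses 0
      have h0 : (0 : ℝ) ∈ Set.uIcc (y 0) (y t) := by
        rw [hy0]; exact Set.mem_uIcc.mpr (Or.inr ⟨h.le, hy₀.1⟩)
      obtain ⟨s, _, hs⟩ := intermediate_value_uIcc (a := (0:ℝ)) (b := t)
        hycont.continuousOn h0
      have := hconst 0 hg0 ⟨s, hs⟩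
      exact absurd this (by linarith)
    · push_neg at h
      -- y t > K; y crosses K
      have h0 : K ∈ Set.uIcc (y 0) (y t) := by
        rw [hy0]; exact Set.mem_uIcc.mpr (Or.inl ⟨hy₀.2, h.le⟩)
      obtain ⟨s, _, hs⟩ := intermediate_value_uIcc (a := (0:ℝ)) (b := t)
        hycont.continuousOn h0
      have := hconst K hgK ⟨s, hs⟩
      exact absurd this (by linarith)
  refine ⟨y, hy0, fun t => ?_⟩
  have : g (y t) = f (y t) := by
    show f (proj (y t)) = f (y t)
    rw [hprojeq _ (hmem t)]
  rw [← this]; exact hyd t
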